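/- Let F be a field and M an a×b M_1-matrix. Then PR(M) ≤ r if and only if there exist invertible scalar matrices P ∈ GL_a(F) and Q ∈ GL_b(F) and nonnegative integers r_1, r_2 with r_1 + r_2 ≤ r such that the (i,j) entry of PMQ is zero whenever i > r_1 and j > r_2 (i.e., PMQ has block form [[M_{11}, M_{12}], [M_{21}, 0]] with M_{11} of size r_1 × r_2). -/

import Mathlib

open MvPolynomial

section Defs

variable {F : Type*} [Field F]

/-- A polynomial in the block variables `x_{i,j}` (`i ∈ Fin d`, `j ∈ Fin n`) is
multilinear exactly in the blocks of `S`: every monomial has degree 1 in each block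
`i ∈ S` and degree 0 in each block `i ∉ S`. -/
def IsMultilinearOn {d n : ℕ} (S : Finset (Fin d))
    (f : MvPolynomial (Fin d × Fin n) F) : Prop :=
  ∀ m ∈ f.support, ∀ i : Fin d,
    (∑ j : Fin n, m (i, j)) = if i ∈ S then 1 else 0

/-- A multilinear form: degree 1 in every block of variables. -/
def IsMultilinear {d n : ℕ} (f : MvPolynomial (Fin d × Fin n) F) : Prop :=
  IsMultilinearOn Finset.univ f

/-- Commutative rank: the rank of the matrix over the field of fractions of the
polynomial ring. -/
noncomputable def CR {σ : Type*} {α β : Type*} [Fintype β]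
    (M : Matrix α β (MvPolynomial σ F)) : ℕ :=
  (M.map (algebraMap (MvPolynomial σ F) (FractionRing (MvPolynomial σ F)))).rank

/-- `M` is the sum of `r` outer products `u ⊗ v`, where `u` has entries multilinear
in the blocks of some `S ⊆ [d]` and `v` has entries multilinear in the complementary
blocks. -/
def HasPRDecomp {d n a b : ℕ}
    (M : Matrix (Fin a) (Fin b) (MvPolynomial (Fin d × Fin n) F)) (r : ℕ) : Prop :=
  ∃ (S : Fin r → Finset (Fin d))
    (u : Fin r → Fin a → MvPolynomial (Fin d × Fin n) F)
    (v : Fin r → Fin b → MvPolynomial (Fin d × Fin n) F),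
    (∀ t i, IsMultilinearOn (S t) (u t i)) ∧
    (∀ t j, IsMultilinearOn (S t)ᶜ (v t j)) ∧
    M = ∑ t, Matrix.of fun i j => u t i * v t j

/-- Partition rank of a matrix of multilinear forms. -/
noncomputable def PR {d n a b : ℕ}
    (M : Matrix (Fin a) (Fin b) (MvPolynomial (Fin d × Fin n) F)) : ℕ :=
  sInf {r | HasPRDecomp M r}

/-- Evaluation of a matrix of multilinear forms at a point `p ∈ (F^n)^d`. -/
noncomputable def evalMat {d n : ℕ} {α β : Type*}
    (M : Matrix α β (MvPolynomial (Fin d × Fin n) F)) (p : Fin d → Fin n → F) :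
    Matrix α β F :=
  M.map (eval fun v => p v.1 v.2)

/-- Max-rank: the largest rank of a scalar evaluation. -/
noncomputable def MaxR {d n : ℕ} {α β : Type*} [Fintype β]
    (M : Matrix α β (MvPolynomial (Fin d × Fin n) F)) : ℕ :=
  ⨆ p : Fin d → Fin n → F, (evalMat M p).rank

/-- Partial evaluation: substitute `x_i := p_i` for `i ∈ S`, leaving the other
blocks of variables untouched. -/
noncomputable def pevalMat {d n : ℕ} {α β : Type*}
    (M : Matrix α β (MvPolynomial (Fin d × Fin n) F)) (S : Finset (Fin d))
    (p : Fin d → Fin n → F) :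
    Matrix α β (MvPolynomial (Fin d × Fin n) F) :=
  M.map (aeval fun v : Fin d × Fin n => if v.1 ∈ S then C (p v.1 v.2) else X v)

end Defs

section D1

variable {F : Type*} [Field F]

/-- Partition-rank decomposition for matrices of linear forms: a sum of `r` outer
products, each either (scalars) ⊗ (linear forms) or (linear forms) ⊗ (scalars). -/
def HasPR1Decomp {n a b : ℕ}
    (M : Matrix (Fin a) (Fin b) (MvPolynomial (Fin n) F)) (r : ℕ) : Prop :=
  ∃ (c : Fin r → Bool)
    (u : Fin r → Fin a → MvPolynomial (Fin n) F)
    (v : Fin r → Fin b → MvPolynomial (Fin n) F),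
    (∀ t i, (u t i).IsHomogeneous (if c t then 0 else 1)) ∧
    (∀ t j, (v t j).IsHomogeneous (if c t then 1 else 0)) ∧
    M = ∑ t, Matrix.of fun i j => u t i * v t j

/-- Partition rank of a matrix of linear forms. -/
noncomputable def PR1 {n a b : ℕ}
    (M : Matrix (Fin a) (Fin b) (MvPolynomial (Fin n) F)) : ℕ :=
  sInf {r | HasPR1Decomp M r}

/-- Max-rank of a matrix of linear forms. -/
noncomputable def MaxR1 {n a b : ℕ}
    (M : Matrix (Fin a) (Fin b) (MvPolynomial (Fin n) F)) : ℕ :=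
  ⨆ p : Fin n → F, (M.map (eval p)).rank

end D1

section Tensor3

variable {F : Type*} [Field F]

/-- Substitute the first two blocks of variables of a trilinear form at `x` and `y`,
leaving a polynomial in the third block. -/
noncomputable def sub01 {n : ℕ} (T : MvPolynomial (Fin 3 × Fin n) F)
    (x y : Fin n → F) : MvPolynomial (Fin 3 × Fin n) F :=
  aeval (fun v : Fin 3 × Fin n =>
    if v.1 = 0 then C (x v.2) else if v.1 = 1 then C (y v.2) else X v) T

open Classical in
/-- The bias of a 3-tensor: the probability over `(x, y)` that `T(x, y, -)` is the
zero linear form. -/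
noncomputable def bias {n : ℕ} [Fintype F] (T : MvPolynomial (Fin 3 × Fin n) F) : ℝ :=
  ((Finset.univ.filter fun p : (Fin n → F) × (Fin n → F) =>
      sub01 T p.1 p.2 = 0).card : ℝ) /
    ((Fintype.card ((Fin n → F) × (Fin n → F))) : ℝ)

/-- The analytic rank of a 3-tensor. -/
noncomputable def AR {n : ℕ} [Fintype F] (T : MvPolynomial (Fin 3 × Fin n) F) : ℝ :=
  - Real.logb (Fintype.card F) (bias T)

/-- A slice-rank decomposition: `T = ∑ f_t g_t` with `f_t` a linear form in one
block and `g_t` a bilinear form in the other two blocks. -/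
def HasSRDecomp {n : ℕ} (T : MvPolynomial (Fin 3 × Fin n) F) (r : ℕ) : Prop :=
  ∃ (c : Fin r → Fin 3) (f g : Fin r → MvPolynomial (Fin 3 × Fin n) F),
    (∀ t, IsMultilinearOn {c t} (f t)) ∧
    (∀ t, IsMultilinearOn ({c t} : Finset (Fin 3))ᶜ (g t)) ∧
    T = ∑ t, f t * g t

/-- Slice rank of a 3-tensor. -/
noncomputable def SR {n : ℕ} (T : MvPolynomial (Fin 3 × Fin n) F) : ℕ :=
  sInf {r | HasSRDecomp T r}

/-- The matrix `mat T` of a 3-tensor, evaluated at `x` in its first block: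
the `(j,k)` entry is `T(x, e_j, e_k)`. -/
noncomputable def matT {n : ℕ} (T : MvPolynomial (Fin 3 × Fin n) F)
    (x : Fin n → F) : Matrix (Fin n) (Fin n) F :=
  Matrix.of fun j k => eval (fun v : Fin 3 × Fin n =>
    if v.1 = 0 then x v.2
    else if v.1 = 1 then (if v.2 = j then 1 else 0)
    else (if v.2 = k then 1 else 0)) T

end Tensor3

section Mult

variable {F : Type*} [Field F]

/-- `mult(f, p)`: the minimum total degree of a monomial of `f(x + p)`. -/
noncomputable def polyMult {n : ℕ} (f : MvPolynomial (Fin n) F) (p : Fin n → F) : ℕ :=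
  sInf {k | ∃ m ∈ (aeval (fun i : Fin n => X i + C (p i)) f :
    MvPolynomial (Fin n) F).support, (∑ i, m i) = k}

end Mult

section MyAux

variable {F : Type*} [Field F]

lemma myEqC_of_hom0 {σ : Type*} {p : MvPolynomial σ F} (h : p.IsHomogeneous 0) :
    p = C (constantCoeff p) := by
  classical
  have ht := h.totalDegree_le
  rw [Nat.le_zero, totalDegree_eq_zero_iff] at ht
  ext m
  by_cases hm : m = 0
  · subst hm; simp [MvPolynomial.coeff_C, MvPolynomial.constantCoeff_eq]
  · rw [MvPolynomial.coeff_C, if_neg fun h' => hm h'.symm]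
    by_contra hc
    exact hm (Finsupp.ext fun x => ht m (MvPolynomial.mem_support_iff.mpr hc) x)

lemma myOuter_entry {R : Type*} [CommRing R] {a b : ℕ}
    (A : Matrix (Fin a) (Fin a) R) (B : Matrix (Fin b) (Fin b) R)
    (f : Fin a → R) (g : Fin b → R) (i : Fin a) (j : Fin b) :
    (A * Matrix.of (fun i j => f i * g j) * B) i j
      = (∑ k, A i k * f k) * (∑ l, g l * B l j) := by
  rw [Finset.sum_mul_sum]
  simp only [Matrix.mul_apply, Matrix.of_apply, Finset.sum_mul]
  rw [Finset.sum_comm]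
  exact Finset.sum_congr rfl fun k _ => Finset.sum_congr rfl fun l _ => by ring

lemma myExists_unit_rows (a r₁ : ℕ) (W : Submodule F (Fin a → F))
    (hW : a - r₁ ≤ Module.finrank F W) :
    ∃ P : Matrix (Fin a) (Fin a) F, IsUnit P ∧ ∀ i : Fin a, r₁ ≤ (i : ℕ) → P i ∈ W := by
  obtain ⟨W', hc⟩ := Submodule.exists_isCompl W
  have hsum : Module.finrank F W' + Module.finrank F W = a := by
    have h := Submodule.finrank_add_eq_of_isCompl hc.symm
    simpa [Module.finrank_pi] using h
  let bb : Module.Basis (Fin (Module.finrank F W') ⊕ Fin (Module.finrank F W)) F (Fin a → F) :=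
    ((Module.finBasis F W').prod (Module.finBasis F W)).map
      (Submodule.prodEquivOfIsCompl W' W hc.symm)
  let e : (Fin (Module.finrank F W') ⊕ Fin (Module.finrank F W)) ≃ Fin a :=
    finSumFinEquiv.trans (finCongr hsum)
  let b' : Module.Basis (Fin a) F (Fin a → F) := bb.reindex e
  refine ⟨Matrix.of (fun i j => b' i j), ?_, ?_⟩
  · have hinv : Invertible ((Pi.basisFun F (Fin a)).toMatrix b') :=
      (Pi.basisFun F (Fin a)).invertibleToMatrix b'
    have hU : IsUnit ((Pi.basisFun F (Fin a)).toMatrix b') := isUnit_of_invertible _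
    have hT : Matrix.of (fun i j => b' i j)
        = Matrix.transpose ((Pi.basisFun F (Fin a)).toMatrix b') := by
      ext i j
      simp [Matrix.transpose_apply, Module.Basis.toMatrix_apply]
    rw [hT, Matrix.isUnit_iff_isUnit_det, Matrix.det_transpose,
      ← Matrix.isUnit_iff_isUnit_det]
    exact hU
  · intro i hi
    show b' i ∈ W
    rcases h2 : e.symm i with k | k
    · exfalso
      have hik : i = e (Sum.inl k) := by rw [← h2, Equiv.apply_symm_apply]
      have hik' : (i : ℕ) = (k : ℕ) := by
        rw [hik]; simp [e]
      have hk := k.2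
      omega
    · have hbi : b' i = bb (Sum.inr k) := by
        rw [Module.Basis.reindex_apply, h2]
      rw [hbi]
      have hx : ((Module.finBasis F W').prod (Module.finBasis F W)) (Sum.inr k)
          = (0, Module.finBasis F W k) :=
        Prod.ext (Module.Basis.prod_apply_inr_fst _ _ _) (Module.Basis.prod_apply_inr_snd _ _ _)
      show (bb (Sum.inr k)) ∈ W
      rw [show bb (Sum.inr k) = (Submodule.prodEquivOfIsCompl W' W hc.symm)
        (((Module.finBasis F W').prod (Module.finBasis F W)) (Sum.inr k)) from Module.Basis.map_apply _ _ _,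
        hx, Submodule.coe_prodEquivOfIsCompl']
      simpa using (Module.finBasis F W k).2

end MyAux

section MyAux2

variable {F : Type*} [Field F]

lemma myHasPR1Decomp_rows {n a b : ℕ}
    (M : Matrix (Fin a) (Fin b) (MvPolynomial (Fin n) F))
    (hM : ∀ i j, (M i j).IsHomogeneous 1) : HasPR1Decomp M a := by
  classical
  refine ⟨fun _ => true, fun t i => if i = t then 1 else 0, fun t j => M t j, ?_, ?_, ?_⟩
  · intro t i
    dsimp only
    split
    · simpa using isHomogeneous_one (Fin n) F
    · simpa using isHomogeneous_zero (Fin n) F 0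
  · intro t j; simpa using hM t j
  · ext i j
    simp only [Matrix.sum_apply, Matrix.of_apply, ite_mul, one_mul, zero_mul]
    rw [Finset.sum_ite_eq]
    simp

lemma myHasPR1Decomp_conj {n a b r : ℕ}
    {M : Matrix (Fin a) (Fin b) (MvPolynomial (Fin n) F)}
    (A : Matrix (Fin a) (Fin a) F) (B : Matrix (Fin b) (Fin b) F)
    (h : HasPR1Decomp M r) :
    HasPR1Decomp (A.map (fun c => (C c : MvPolynomial (Fin n) F)) * M *
      B.map (fun c => (C c : MvPolynomial (Fin n) F))) r := by
  obtain ⟨c, u, v, hu, hv, rfl⟩ := h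
  refine ⟨c, fun t i => ∑ k, C (A i k) * u t k,
    fun t j => ∑ l, v t l * C (B l j), ?_, ?_, ?_⟩
  · intro t i
    apply MvPolynomial.IsHomogeneous.sum
    intro k _
    simpa using (isHomogeneous_C (Fin n) (A i k)).mul (hu t k)
  · intro t j
    apply MvPolynomial.IsHomogeneous.sum
    intro l _
    simpa using (hv t l).mul (isHomogeneous_C (Fin n) (B l j))
  · rw [Matrix.mul_sum, Matrix.sum_mul]
    refine Matrix.ext fun i j => ?_
    simp only [Matrix.sum_apply]
    apply Finset.sum_congr rfl
    intro t _
    rw [myOuter_entry]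
    rfl

end MyAux2
/-- For a matrix `M` of linear forms, `PR(M) ≤ r` iff there are
invertible scalar matrices `P, Q` and `r₁ + r₂ ≤ r` such that `PMQ` vanishes in
its bottom-right `(a − r₁) × (b − r₂)` block. -/
theorem statement_16 (F : Type*) [Field F] (n a b : ℕ) (hn : 1 ≤ n) (r : ℕ)
    (M : Matrix (Fin a) (Fin b) (MvPolynomial (Fin n) F))
    (hM : ∀ i j, (M i j).IsHomogeneous 1) :
    PR1 M ≤ r ↔
      ∃ (P : Matrix (Fin a) (Fin a) F) (Q : Matrix (Fin b) (Fin b) F) (r₁ r₂ : ℕ),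
        IsUnit P ∧ IsUnit Q ∧ r₁ + r₂ ≤ r ∧
        ∀ (i : Fin a) (j : Fin b), r₁ ≤ (i : ℕ) → r₂ ≤ (j : ℕ) →
          (P.map (fun c => (MvPolynomial.C c : MvPolynomial (Fin n) F)) * M *
            Q.map (fun c => (MvPolynomial.C c : MvPolynomial (Fin n) F))) i j = 0 := by
  classical
  constructor
  · intro hr
    have hne : {r' | HasPR1Decomp M r'}.Nonempty := ⟨a, myHasPR1Decomp_rows M hM⟩
    have hdec : HasPR1Decomp M (PR1 M) := Nat.sInf_mem hne
    have hPR : PR1 M ≤ r := hr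
    obtain ⟨c, u, v, hu, hv, hMeq⟩ := hdec
    set r₁ := Fintype.card {t : Fin (PR1 M) // c t = true} with hr₁
    set r₂ := Fintype.card {t : Fin (PR1 M) // c t = false} with hr₂
    have hcard : r₁ + r₂ = PR1 M := by
      rw [hr₁, hr₂, Fintype.card_subtype, Fintype.card_subtype]
      have h := Finset.card_filter_add_card_filter_not
        (s := (Finset.univ : Finset (Fin (PR1 M)))) (p := fun t => c t = true)
      simpa only [Bool.not_eq_true, Finset.card_univ, Fintype.card_fin] using h
    -- left kernel for the scalar-u terms
    set Umat : Matrix (Fin a) {t : Fin (PR1 M) // c t = true} F :=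
      Matrix.of (fun k t => constantCoeff (u t.1 k)) with hUmat
    have hWU : a - r₁ ≤ Module.finrank F (LinearMap.ker Umat.vecMulLinear) := by
      have h3 := LinearMap.finrank_range_add_finrank_ker Umat.vecMulLinear
      have h4 : Module.finrank F (LinearMap.range Umat.vecMulLinear) ≤ r₁ := by
        have h5 := Submodule.finrank_le (LinearMap.range Umat.vecMulLinear)
        simpa [Module.finrank_pi] using h5
      have h6 : Module.finrank F (Fin a → F) = a := by simp [Module.finrank_pi]
      rw [h6] at h3
      omega
    obtain ⟨P, hPu, hPk⟩ := myExists_unit_rows a r₁ _ hWU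
    -- left kernel for the scalar-v terms
    set Vmat : Matrix (Fin b) {t : Fin (PR1 M) // c t = false} F :=
      Matrix.of (fun l t => constantCoeff (v t.1 l)) with hVmat
    have hWV : b - r₂ ≤ Module.finrank F (LinearMap.ker Vmat.vecMulLinear) := by
      have h3 := LinearMap.finrank_range_add_finrank_ker Vmat.vecMulLinear
      have h4 : Module.finrank F (LinearMap.range Vmat.vecMulLinear) ≤ r₂ := by
        have h5 := Submodule.finrank_le (LinearMap.range Vmat.vecMulLinear)
        simpa [Module.finrank_pi] using h5
      have h6 : Module.finrank F (Fin b → F) = b := by simp [Module.finrank_pi]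
      rw [h6] at h3
      omega
    obtain ⟨Q₀, hQu, hQk⟩ := myExists_unit_rows b r₂ _ hWV
    refine ⟨P, Matrix.transpose Q₀, r₁, r₂, hPu, ?_, by omega, ?_⟩
    · rw [Matrix.isUnit_iff_isUnit_det, Matrix.det_transpose,
        ← Matrix.isUnit_iff_isUnit_det]
      exact hQu
    · intro i j hi hj
      rw [hMeq, Matrix.mul_sum, Matrix.sum_mul, Matrix.sum_apply]
      apply Finset.sum_eq_zero
      intro t _
      rw [myOuter_entry]
      by_cases hct : c t = true
      · have hk : ∀ k, u t k = C (constantCoeff (u t k)) := fun k =>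
          myEqC_of_hom0 (by simpa [hct] using hu t k)
        have hstep : (∑ k, (P.map (fun c => (C c : MvPolynomial (Fin n) F))) i k * u t k)
            = C (Umat.vecMulLinear (P i) ⟨t, hct⟩) := by
          have hvm : Umat.vecMulLinear (P i) ⟨t, hct⟩
              = ∑ k, P i k * Umat k ⟨t, hct⟩ := rfl
          rw [hvm, map_sum]
          refine Finset.sum_congr rfl fun k _ => ?_
          rw [map_mul]
          show C (P i k) * u t k = C (P i k) * C (constantCoeff (u t k))
          rw [← hk k]
        rw [hstep]
        have hker := hPk i hi
        rw [LinearMap.mem_ker] at hker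
        rw [hker]
        simp
      · have hcf : c t = false := by simpa using hct
        have hk : ∀ l, v t l = C (constantCoeff (v t l)) := fun l =>
          myEqC_of_hom0 (by simpa [hcf] using hv t l)
        have hstep : (∑ l, v t l *
            ((Matrix.transpose Q₀).map (fun c => (C c : MvPolynomial (Fin n) F))) l j)
            = C (Vmat.vecMulLinear (Q₀ j) ⟨t, hcf⟩) := by
          have hvm : Vmat.vecMulLinear (Q₀ j) ⟨t, hcf⟩
              = ∑ l, Q₀ j l * Vmat l ⟨t, hcf⟩ := rfl
          rw [hvm, map_sum]
          refine Finset.sum_congr rfl fun l _ => ?_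
          rw [map_mul]
          show v t l * C (Q₀ j l) = C (Q₀ j l) * C (constantCoeff (v t l))
          rw [← hk l, mul_comm]
        rw [hstep]
        have hker := hQk j hj
        rw [LinearMap.mem_ker] at hker
        rw [hker]
        simp
  · rintro ⟨P, Q, r₁, r₂, hP, hQ, hle, hzero⟩
    set N := P.map (fun c => (MvPolynomial.C c : MvPolynomial (Fin n) F)) * M *
      Q.map (fun c => (MvPolynomial.C c : MvPolynomial (Fin n) F)) with hNdef
    have hNhom : ∀ i j, (N i j).IsHomogeneous 1 := by
      intro i j
      rw [hNdef, Matrix.mul_apply]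
      apply MvPolynomial.IsHomogeneous.sum
      intro l _
      have h1 : (((P.map (fun c => (MvPolynomial.C c : MvPolynomial (Fin n) F))) * M) i l).IsHomogeneous 1 := by
        rw [Matrix.mul_apply]
        apply MvPolynomial.IsHomogeneous.sum
        intro k _
        simpa using (isHomogeneous_C (Fin n) (P i k)).mul (hM k l)
      simpa using h1.mul (isHomogeneous_C (Fin n) (Q l j))
    have hdecN : HasPR1Decomp N (r₁ + r₂) := by
      refine ⟨fun t => decide ((t : ℕ) < r₁),
        fun t i => if (t : ℕ) < r₁ then (if (i : ℕ) = (t : ℕ) then 1 else 0)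
          else (if (i : ℕ) < r₁ then 0 else
            if h : (t : ℕ) - r₁ < b then N i ⟨(t : ℕ) - r₁, h⟩ else 0),
        fun t j => if (t : ℕ) < r₁ then (if h : (t : ℕ) < a then N ⟨(t : ℕ), h⟩ j else 0)
          else (if (j : ℕ) = (t : ℕ) - r₁ then 1 else 0), ?_, ?_, ?_⟩
      · intro t i
        dsimp only
        by_cases ht : (t : ℕ) < r₁ <;>
          simp only [decide_eq_true_eq, ht, if_true, if_false]
        · split
          · simpa using isHomogeneous_one (Fin n) F
          · simpa using isHomogeneous_zero (Fin n) F 0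
        · split
          · simpa using isHomogeneous_zero (Fin n) F 1
          · split
            · apply hNhom
            · simpa using isHomogeneous_zero (Fin n) F 1
      · intro t j
        dsimp only
        by_cases ht : (t : ℕ) < r₁ <;>
          simp only [decide_eq_true_eq, ht, if_true, if_false]
        · split
          · apply hNhom
          · simpa using isHomogeneous_zero (Fin n) F 1
        · split
          · simpa using isHomogeneous_one (Fin n) F
          · simpa using isHomogeneous_zero (Fin n) F 0
      · refine Matrix.ext fun i j => ?_
        simp only [Matrix.sum_apply, Matrix.of_apply]
        rw [Fin.sum_univ_add]
        have hS1 : (∑ p : Fin r₁,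
            (if ((Fin.castAdd r₂ p : Fin (r₁ + r₂)) : ℕ) < r₁ then (if (i : ℕ) = ((Fin.castAdd r₂ p : Fin (r₁ + r₂)) : ℕ) then (1 : MvPolynomial (Fin n) F) else 0)
              else (if (i : ℕ) < r₁ then 0 else
                if h : ((Fin.castAdd r₂ p : Fin (r₁ + r₂)) : ℕ) - r₁ < b then N i ⟨((Fin.castAdd r₂ p : Fin (r₁ + r₂)) : ℕ) - r₁, h⟩ else 0)) *
            (if ((Fin.castAdd r₂ p : Fin (r₁ + r₂)) : ℕ) < r₁ then (if h : ((Fin.castAdd r₂ p : Fin (r₁ + r₂)) : ℕ) < a then N ⟨((Fin.castAdd r₂ p : Fin (r₁ + r₂)) : ℕ), h⟩ j else 0)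
              else (if (j : ℕ) = ((Fin.castAdd r₂ p : Fin (r₁ + r₂)) : ℕ) - r₁ then 1 else 0)))
            = if (i : ℕ) < r₁ then N i j else 0 := by
          have step : ∀ p : Fin r₁,
              (if ((Fin.castAdd r₂ p : Fin (r₁ + r₂)) : ℕ) < r₁ then (if (i : ℕ) = ((Fin.castAdd r₂ p : Fin (r₁ + r₂)) : ℕ) then (1 : MvPolynomial (Fin n) F) else 0)
                else (if (i : ℕ) < r₁ then 0 else
                  if h : ((Fin.castAdd r₂ p : Fin (r₁ + r₂)) : ℕ) - r₁ < b then N i ⟨((Fin.castAdd r₂ p : Fin (r₁ + r₂)) : ℕ) - r₁, h⟩ else 0)) *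
              (if ((Fin.castAdd r₂ p : Fin (r₁ + r₂)) : ℕ) < r₁ then (if h : ((Fin.castAdd r₂ p : Fin (r₁ + r₂)) : ℕ) < a then N ⟨((Fin.castAdd r₂ p : Fin (r₁ + r₂)) : ℕ), h⟩ j else 0)
                else (if (j : ℕ) = ((Fin.castAdd r₂ p : Fin (r₁ + r₂)) : ℕ) - r₁ then 1 else 0))
              = if (i : ℕ) = (p : ℕ) then N i j else 0 := by
            intro p
            simp only [Fin.coe_castAdd]
            rw [if_pos p.2, if_pos p.2]
            by_cases hip : (i : ℕ) = (p : ℕ)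
            · rw [if_pos hip, if_pos hip, one_mul,
                dif_pos (show (p : ℕ) < a from hip ▸ i.2)]
              have he : (⟨(p : ℕ), hip ▸ i.2⟩ : Fin a) = i := Fin.ext hip.symm
              rw [he]
            · rw [if_neg hip, if_neg hip, zero_mul]
          rw [Finset.sum_congr rfl fun p _ => step p]
          by_cases hi : (i : ℕ) < r₁
          · rw [if_pos hi, Finset.sum_eq_single (⟨(i : ℕ), hi⟩ : Fin r₁)]
            · rw [if_pos rfl]
            · intro p _ hp
              exact if_neg (fun h : (i : ℕ) = (p : ℕ) => hp (Fin.ext h.symm))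
            · intro h
              exact absurd (Finset.mem_univ _) h
          · rw [if_neg hi]
            exact Finset.sum_eq_zero fun p _ =>
              if_neg (fun h : (i : ℕ) = (p : ℕ) => hi (by omega))
        have hS2 : (∑ q : Fin r₂,
            (if ((Fin.natAdd r₁ q : Fin (r₁ + r₂)) : ℕ) < r₁ then (if (i : ℕ) = ((Fin.natAdd r₁ q : Fin (r₁ + r₂)) : ℕ) then (1 : MvPolynomial (Fin n) F) else 0)
              else (if (i : ℕ) < r₁ then 0 else
                if h : ((Fin.natAdd r₁ q : Fin (r₁ + r₂)) : ℕ) - r₁ < b then N i ⟨((Fin.natAdd r₁ q : Fin (r₁ + r₂)) : ℕ) - r₁, h⟩ else 0)) *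
            (if ((Fin.natAdd r₁ q : Fin (r₁ + r₂)) : ℕ) < r₁ then (if h : ((Fin.natAdd r₁ q : Fin (r₁ + r₂)) : ℕ) < a then N ⟨((Fin.natAdd r₁ q : Fin (r₁ + r₂)) : ℕ), h⟩ j else 0)
              else (if (j : ℕ) = ((Fin.natAdd r₁ q : Fin (r₁ + r₂)) : ℕ) - r₁ then 1 else 0)))
            = if r₁ ≤ (i : ℕ) ∧ (j : ℕ) < r₂ then N i j else 0 := by
          have step : ∀ q : Fin r₂,
              (if ((Fin.natAdd r₁ q : Fin (r₁ + r₂)) : ℕ) < r₁ then (if (i : ℕ) = ((Fin.natAdd r₁ q : Fin (r₁ + r₂)) : ℕ) then (1 : MvPolynomial (Fin n) F) else 0)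
                else (if (i : ℕ) < r₁ then 0 else
                  if h : ((Fin.natAdd r₁ q : Fin (r₁ + r₂)) : ℕ) - r₁ < b then N i ⟨((Fin.natAdd r₁ q : Fin (r₁ + r₂)) : ℕ) - r₁, h⟩ else 0)) *
              (if ((Fin.natAdd r₁ q : Fin (r₁ + r₂)) : ℕ) < r₁ then (if h : ((Fin.natAdd r₁ q : Fin (r₁ + r₂)) : ℕ) < a then N ⟨((Fin.natAdd r₁ q : Fin (r₁ + r₂)) : ℕ), h⟩ j else 0)
                else (if (j : ℕ) = ((Fin.natAdd r₁ q : Fin (r₁ + r₂)) : ℕ) - r₁ then 1 else 0))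
              = if r₁ ≤ (i : ℕ) ∧ (j : ℕ) = (q : ℕ) then N i j else 0 := by
            intro q
            have hq' : ¬ ((Fin.natAdd r₁ q : Fin (r₁ + r₂)) : ℕ) < r₁ := by
              simp only [Fin.coe_natAdd]
              omega
            rw [if_neg hq', if_neg hq']
            simp only [Fin.coe_natAdd, Nat.add_sub_cancel_left]
            by_cases hij : (j : ℕ) = (q : ℕ)
            · rw [if_pos hij, mul_one]
              by_cases hi : (i : ℕ) < r₁
              · rw [if_pos hi,
                  if_neg (show ¬(r₁ ≤ (i : ℕ) ∧ (j : ℕ) = (q : ℕ)) from fun hc => by omega)]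
              · rw [if_neg hi, dif_pos (show (q : ℕ) < b from hij ▸ j.2),
                  if_pos ⟨by omega, hij⟩]
                have he : (⟨(q : ℕ), hij ▸ j.2⟩ : Fin b) = j := Fin.ext hij.symm
                rw [he]
            · rw [if_neg hij, mul_zero,
                if_neg (fun hc : r₁ ≤ (i : ℕ) ∧ (j : ℕ) = (q : ℕ) => hij hc.2)]
          rw [Finset.sum_congr rfl fun q _ => step q]
          by_cases hc : r₁ ≤ (i : ℕ) ∧ (j : ℕ) < r₂
          · rw [if_pos hc, Finset.sum_eq_single (⟨(j : ℕ), hc.2⟩ : Fin r₂)]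
            · rw [if_pos ⟨hc.1, rfl⟩]
            · intro q _ hq
              exact if_neg (fun h : r₁ ≤ (i : ℕ) ∧ (j : ℕ) = (q : ℕ) =>
                hq (Fin.ext h.2.symm))
            · intro h
              exact absurd (Finset.mem_univ _) h
          · rw [if_neg hc]
            exact Finset.sum_eq_zero fun q _ =>
              if_neg (fun h : r₁ ≤ (i : ℕ) ∧ (j : ℕ) = (q : ℕ) =>
                hc ⟨h.1, h.2.trans_lt q.2⟩)
        rw [hS1, hS2]
        by_cases hi : (i : ℕ) < r₁
        · rw [if_pos hi, if_neg (by omega), add_zero]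
        · rw [if_neg hi]
          by_cases hj : (j : ℕ) < r₂
          · rw [if_pos ⟨by omega, hj⟩, zero_add]
          · rw [if_neg (by omega), add_zero]
            exact hzero i j (by omega) (by omega)
    have e1 : ((hP.unit⁻¹ : (Matrix (Fin a) (Fin a) F)ˣ) : Matrix (Fin a) (Fin a) F).map
          (fun c => (MvPolynomial.C c : MvPolynomial (Fin n) F)) *
        P.map (fun c => (MvPolynomial.C c : MvPolynomial (Fin n) F)) = 1 := by
      rw [show (fun c => (MvPolynomial.C c : MvPolynomial (Fin n) F))
          = ⇑(MvPolynomial.C : F →+* MvPolynomial (Fin n) F) from rfl]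
      rw [← Matrix.map_mul, hP.val_inv_mul]
      exact Matrix.map_one _ (map_zero _) (map_one _)
    have e2 : Q.map (fun c => (MvPolynomial.C c : MvPolynomial (Fin n) F)) *
        ((hQ.unit⁻¹ : (Matrix (Fin b) (Fin b) F)ˣ) : Matrix (Fin b) (Fin b) F).map
          (fun c => (MvPolynomial.C c : MvPolynomial (Fin n) F)) = 1 := by
      rw [show (fun c => (MvPolynomial.C c : MvPolynomial (Fin n) F))
          = ⇑(MvPolynomial.C : F →+* MvPolynomial (Fin n) F) from rfl]
      rw [← Matrix.map_mul, hQ.mul_val_inv]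
      exact Matrix.map_one _ (map_zero _) (map_one _)
    have hMN : M = ((hP.unit⁻¹ : (Matrix (Fin a) (Fin a) F)ˣ) : Matrix (Fin a) (Fin a) F).map
          (fun c => (MvPolynomial.C c : MvPolynomial (Fin n) F)) * N *
        ((hQ.unit⁻¹ : (Matrix (Fin b) (Fin b) F)ˣ) : Matrix (Fin b) (Fin b) F).map
          (fun c => (MvPolynomial.C c : MvPolynomial (Fin n) F)) := by
      rw [hNdef]
      calc
        M = (((hP.unit⁻¹ : (Matrix (Fin a) (Fin a) F)ˣ) : Matrix (Fin a) (Fin a) F).map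
              (fun c => (MvPolynomial.C c : MvPolynomial (Fin n) F)) *
            P.map (fun c => (MvPolynomial.C c : MvPolynomial (Fin n) F))) * M *
            (Q.map (fun c => (MvPolynomial.C c : MvPolynomial (Fin n) F)) *
            ((hQ.unit⁻¹ : (Matrix (Fin b) (Fin b) F)ˣ) : Matrix (Fin b) (Fin b) F).map
              (fun c => (MvPolynomial.C c : MvPolynomial (Fin n) F))) := by
              rw [e1, e2, Matrix.one_mul, Matrix.mul_one]
        _ = _ := by simp only [Matrix.mul_assoc]
    have hfin : HasPR1Decomp M (r₁ + r₂) := by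
      rw [hMN]
      exact myHasPR1Decomp_conj _ _ hdecN
    exact le_trans (Nat.sInf_le hfin) hle
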